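/- arXiv:2605.18320 — 4 statements merged into one kernel-verified Lean document; each statement's English description precedes it below -/
import Mathlib

section
/- Let S be a type (the state space), δ_τ > 0, δ_sub > 0, V_max ∈ ℝ, and V_star : S → ℝ with V_max ≥ V_star(s) for all s ∈ S. Let p ∈ [0,1] satisfy p ≤ (δ_τ + δ_sub) / (V_max − V_star(s) + δ_τ + δ_sub) for all s ∈ S. Suppose (V_k)_{k∈ℕ} is a sequence of functions S → ℝ such that V_0(s) ≤ V_star(s) for all s, and for every k: if V_k(s) ≤ V_star(s) for all s, then V_{k+1}(s) ≤ (1 − p)·(V_star(s) − (δ_τ + δ_sub)) + p·V_max for all s. Then V_k(s) ≤ V_star(s) for all k ∈ ℕ and all s ∈ S. -/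
theorem isep_safety_statewise
    (S : Type*)
    (δτ δsub Vmax p : ℝ)
    (Vstar : S → ℝ)
    (hδτ : 0 < δτ) (hδsub : 0 < δsub)
    (hV : ∀ s, Vstar s ≤ Vmax)
    (hp0 : 0 ≤ p) (hp1 : p ≤ 1)
    (hpbound : ∀ s, p ≤ (δτ + δsub) / (Vmax - Vstar s + δτ + δsub))
    (V : ℕ → S → ℝ)
    (h0 : ∀ s, V 0 s ≤ Vstar s)
    (hstep : ∀ k, (∀ s, V k s ≤ Vstar s) →
      ∀ s, V (k + 1) s ≤ (1 - p) * (Vstar s - (δτ + δsub)) + p * Vmax) :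
    ∀ k s, V k s ≤ Vstar s := by
  intro k
  induction k with
  | zero => exact h0
  | succ n ih =>
    intro s
    have hD : 0 < Vmax - Vstar s + δτ + δsub := by
      have := hV s; linarith
    have hmul : p * (Vmax - Vstar s + δτ + δsub) ≤ δτ + δsub :=
      (le_div_iff₀ hD).mp (hpbound s)
    have := hstep n ih s
    nlinarith
end

section
/- Let (Ω, P) be a probability space, X : Ω → ℝ an integrable random variable, and τ ∈ (0,1). Then there exists a unique real number t such that τ·∫ max(X − t, 0) dP = (1 − τ)·∫ max(t − X, 0) dP. -/
open MeasureTheory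

lemma max_ite (a : ℝ) : max a 0 = if 0 ≤ a then a else 0 := by
  split
  · exact max_eq_left ‹_›
  · exact max_eq_right (le_of_not_ge ‹_›)

lemma expectile_pointwise (τ x t s : ℝ) (h0 : 0 < τ) (h1 : τ < 1) (hts : t < s) :
    (τ * max (x - s) 0 - (1 - τ) * max (s - x) 0) + min τ (1 - τ) * (s - t)
      ≤ τ * max (x - t) 0 - (1 - τ) * max (t - x) 0 := by
  have hc1 : min τ (1 - τ) ≤ τ := min_le_left _ _
  have hc2 : min τ (1 - τ) ≤ 1 - τ := min_le_right _ _
  have hc0 : 0 < min τ (1 - τ) := lt_min h0 (by linarith)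
  rw [max_ite, max_ite, max_ite, max_ite]
  split_ifs <;>
    nlinarith [mul_le_mul_of_nonneg_right hc1 (by linarith : (0:ℝ) ≤ s - t),
      mul_le_mul_of_nonneg_right hc2 (by linarith : (0:ℝ) ≤ s - t), hts,
      mul_pos h0 (by linarith : (0:ℝ) < s - t),
      mul_pos (by linarith : (0:ℝ) < 1 - τ) (by linarith : (0:ℝ) < s - t)]

theorem expectile_exists_unique
    {Ω : Type*} [MeasurableSpace Ω] (P : Measure Ω) [IsProbabilityMeasure P]
    (X : Ω → ℝ) (hX : Integrable X P)
    (τ : ℝ) (hτ : τ ∈ Set.Ioo (0 : ℝ) 1) :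
    ∃! t : ℝ,
      τ * ∫ ω, max (X ω - t) 0 ∂P = (1 - τ) * ∫ ω, max (t - X ω) 0 ∂P := by
  obtain ⟨h0, h1⟩ := hτ
  set c := min τ (1 - τ) with hc
  have hcpos : 0 < c := lt_min h0 (by linarith)
  -- integrability
  have hint1 : ∀ t : ℝ, Integrable (fun ω => max (X ω - t) 0) P := fun t =>
    (hX.sub (integrable_const t)).pos_part
  have hint2 : ∀ t : ℝ, Integrable (fun ω => max (t - X ω) 0) P := fun t =>
    ((integrable_const t).sub hX).pos_part
  set g : ℝ → Ω → ℝ := fun t ω => τ * max (X ω - t) 0 - (1 - τ) * max (t - X ω) 0 with hg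
  have hintg : ∀ t : ℝ, Integrable (g t) P := fun t =>
    ((hint1 t).const_mul τ).sub ((hint2 t).const_mul (1 - τ))
  set f : ℝ → ℝ := fun t => ∫ ω, g t ω ∂P with hf
  have hfeq : ∀ t : ℝ, f t = τ * (∫ ω, max (X ω - t) 0 ∂P)
      - (1 - τ) * (∫ ω, max (t - X ω) 0 ∂P) := by
    intro t
    rw [hf]
    simp only [hg]
    rw [integral_sub ((hint1 t).const_mul τ) ((hint2 t).const_mul (1 - τ)),
      integral_const_mul, integral_const_mul]
  have hiff : ∀ t : ℝ, (τ * ∫ ω, max (X ω - t) 0 ∂P = (1 - τ) * ∫ ω, max (t - X ω) 0 ∂P)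
      ↔ f t = 0 := by
    intro t; rw [hfeq t]; constructor <;> intro h <;> linarith
  -- key decrease estimate
  have key : ∀ t s : ℝ, t < s → f s + c * (s - t) ≤ f t := by
    intro t s hts
    have hmono : ∫ ω, (g s ω + c * (s - t)) ∂P ≤ ∫ ω, g t ω ∂P := by
      apply integral_mono ((hintg s).add (integrable_const _)) (hintg t)
      intro ω
      exact expectile_pointwise τ (X ω) t s h0 h1 hts
    rwa [integral_add (hintg s) (integrable_const _), integral_const, probReal_univ,
      smul_eq_mul, one_mul] at hmono
  -- Lipschitz continuity
  have hlip : LipschitzWith 1 f := by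
    apply LipschitzWith.of_dist_le_mul
    intro t s
    rw [Real.dist_eq, Real.dist_eq, NNReal.coe_one, one_mul]
    have hsub : f t - f s = ∫ ω, (g t ω - g s ω) ∂P := by
      rw [integral_sub (hintg t) (hintg s)]
    rw [hsub]
    have hnorm : |∫ ω, (g t ω - g s ω) ∂P| ≤ ∫ ω, |g t ω - g s ω| ∂P := by
      simpa [Real.norm_eq_abs] using
        norm_integral_le_integral_norm (μ := P) (f := fun ω => g t ω - g s ω)
    refine hnorm.trans ?_
    calc ∫ ω, |g t ω - g s ω| ∂P ≤ ∫ _ω, |t - s| ∂P := by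
          apply integral_mono ((hintg t).sub (hintg s)).abs (integrable_const _)
          intro ω
          simp only [hg]
          have e1 : |max (X ω - t) 0 - max (X ω - s) 0| ≤ |t - s| := by
            have h := abs_max_sub_max_le_abs (X ω - t) (X ω - s) (0:ℝ)
            rwa [show X ω - t - (X ω - s) = -(t - s) by ring, abs_neg] at h
          have e2 : |max (t - X ω) 0 - max (s - X ω) 0| ≤ |t - s| := by
            have h := abs_max_sub_max_le_abs (t - X ω) (s - X ω) (0:ℝ)
            rwa [show t - X ω - (s - X ω) = t - s by ring] at h
          calc |τ * max (X ω - t) 0 - (1 - τ) * max (t - X ω) 0 -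
                (τ * max (X ω - s) 0 - (1 - τ) * max (s - X ω) 0)|
              = |τ * (max (X ω - t) 0 - max (X ω - s) 0)
                  - (1 - τ) * (max (t - X ω) 0 - max (s - X ω) 0)| := by ring_nf
            _ ≤ |τ * (max (X ω - t) 0 - max (X ω - s) 0)|
                + |(1 - τ) * (max (t - X ω) 0 - max (s - X ω) 0)| := abs_sub _ _
            _ ≤ τ * |t - s| + (1 - τ) * |t - s| := by
                rw [abs_mul, abs_mul, abs_of_pos h0, abs_of_pos (by linarith : (0:ℝ) < 1 - τ)]
                gcongr
            _ = |t - s| := by ring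
      _ = |t - s| := by rw [integral_const, probReal_univ]; simp
  have hcont : Continuous f := hlip.continuous
  -- find root via IVT
  set b : ℝ := |f 0| / c + 1 with hb
  have hbpos : 0 < b := by positivity
  have hcb : c * b = |f 0| + c := by
    rw [hb, mul_add, mul_one, mul_div_cancel₀ _ (ne_of_gt hcpos)]
  have hfb : f b < 0 := by
    have hk := key 0 b hbpos
    have h2 : c * (b - 0) = |f 0| + c := by rw [sub_zero, hcb]
    have h3 : f 0 ≤ |f 0| := le_abs_self _
    linarith
  have hfa : 0 < f (-b) := by
    have hk := key (-b) 0 (by linarith)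
    have h2 : c * (0 - -b) = |f 0| + c := by rw [show (0:ℝ) - -b = b by ring, hcb]
    have h3 : -|f 0| ≤ f 0 := neg_abs_le _
    linarith
  have hab : (-b : ℝ) ≤ b := by linarith
  have hiv : (0 : ℝ) ∈ f '' Set.Icc (-b) b := by
    apply intermediate_value_Icc' hab hcont.continuousOn
    exact ⟨le_of_lt hfb, le_of_lt hfa⟩
  obtain ⟨t, _, ht⟩ := hiv
  refine ⟨t, (hiff t).mpr ht, ?_⟩
  intro s hs
  have hs' : f s = 0 := (hiff s).mp hs
  by_contra hne
  rcases lt_or_gt_of_ne hne with h | h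
  · have hk := key s t h
    rw [ht, hs'] at hk
    nlinarith
  · have hk := key t s h
    rw [ht, hs'] at hk
    nlinarith
end

section
/- Let (Ω, P) be a probability space, X : Ω → ℝ a random variable with ∫ X² dP < ∞, and τ ∈ (0,1). Define the asymmetric squared loss L(t) = ∫ |τ − 1{X(ω) < t}|·(X(ω) − t)² dP(ω). Then a real number t minimizes L (i.e., L(t) ≤ L(s) for all s ∈ ℝ) if and only if τ·∫ max(X − t, 0) dP = (1 − τ)·∫ max(t − X, 0) dP. -/
open MeasureTheory

private lemma expectile_pt_eq (τ x s : ℝ) (h0 : 0 ≤ τ) (h1 : τ ≤ 1) :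
    |τ - (if x < s then (1:ℝ) else 0)| * (x - s)^2
      = τ * (max (x - s) 0)^2 + (1 - τ) * (max (s - x) 0)^2 := by
  rcases lt_or_ge x s with h|h
  · rw [if_pos h, max_eq_right (by linarith : x - s ≤ 0),
      max_eq_left (by linarith : (0:ℝ) ≤ s - x), abs_of_nonpos (by linarith)]
    ring
  · rw [if_neg (not_lt.mpr h), max_eq_left (by linarith : (0:ℝ) ≤ x - s),
      max_eq_right (by linarith : s - x ≤ 0), sub_zero, abs_of_nonneg h0]
    ring

private lemma q_lower (x t s : ℝ) :
    (max (x-t) 0)^2 + 2*(t-s)*max (x-t) 0 ≤ (max (x-s) 0)^2 := by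
  rcases le_total x t with h|h
  · rw [max_eq_right (by linarith : x - t ≤ 0)]
    rcases le_total x s with h2|h2
    · rw [max_eq_right (by linarith : x - s ≤ 0)]; nlinarith
    · rw [max_eq_left (by linarith : (0:ℝ) ≤ x - s)]; nlinarith
  · rw [max_eq_left (by linarith : (0:ℝ) ≤ x - t)]
    rcases le_total x s with h2|h2
    · rw [max_eq_right (by linarith : x - s ≤ 0)]; nlinarith
    · rw [max_eq_left (by linarith : (0:ℝ) ≤ x - s)]; nlinarith [sq_nonneg (t-s)]

private lemma q_lower' (x t s : ℝ) :
    (max (t-x) 0)^2 + 2*(s-t)*max (t-x) 0 ≤ (max (s-x) 0)^2 := by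
  rcases le_total t x with h|h
  · rw [max_eq_right (by linarith : t - x ≤ 0)]
    rcases le_total s x with h2|h2
    · rw [max_eq_right (by linarith : s - x ≤ 0)]; nlinarith
    · rw [max_eq_left (by linarith : (0:ℝ) ≤ s - x)]; nlinarith
  · rw [max_eq_left (by linarith : (0:ℝ) ≤ t - x)]
    rcases le_total s x with h2|h2
    · rw [max_eq_right (by linarith : s - x ≤ 0)]; nlinarith
    · rw [max_eq_left (by linarith : (0:ℝ) ≤ s - x)]; nlinarith [sq_nonneg (s-t)]

private lemma q_upper (x t s : ℝ) :
    (max (x-s) 0)^2 ≤ (max (x-t) 0)^2 + 2*(t-s)*max (x-t) 0 + (s-t)^2 := by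
  rcases le_total x t with h|h
  · rw [max_eq_right (by linarith : x - t ≤ 0)]
    rcases le_total x s with h2|h2
    · rw [max_eq_right (by linarith : x - s ≤ 0)]; nlinarith
    · rw [max_eq_left (by linarith : (0:ℝ) ≤ x - s)]; nlinarith
  · rw [max_eq_left (by linarith : (0:ℝ) ≤ x - t)]
    rcases le_total x s with h2|h2
    · rw [max_eq_right (by linarith : x - s ≤ 0)]; nlinarith
    · rw [max_eq_left (by linarith : (0:ℝ) ≤ x - s)]; nlinarith

private lemma q_upper' (x t s : ℝ) :
    (max (s-x) 0)^2 ≤ (max (t-x) 0)^2 + 2*(s-t)*max (t-x) 0 + (s-t)^2 := by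
  rcases le_total t x with h|h
  · rw [max_eq_right (by linarith : t - x ≤ 0)]
    rcases le_total s x with h2|h2
    · rw [max_eq_right (by linarith : s - x ≤ 0)]; nlinarith
    · rw [max_eq_left (by linarith : (0:ℝ) ≤ s - x)]; nlinarith
  · rw [max_eq_left (by linarith : (0:ℝ) ≤ t - x)]
    rcases le_total s x with h2|h2
    · rw [max_eq_right (by linarith : s - x ≤ 0)]; nlinarith
    · rw [max_eq_left (by linarith : (0:ℝ) ≤ s - x)]; nlinarith

private lemma pt_lower (τ x t s : ℝ) (h0 : 0 ≤ τ) (h1 : τ ≤ 1) :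
    τ * (max (x-t) 0)^2 + (1-τ) * (max (t-x) 0)^2
      - (s - t) * (2*τ*max (x-t) 0 - 2*(1-τ)*max (t-x) 0)
    ≤ τ * (max (x-s) 0)^2 + (1-τ) * (max (s-x) 0)^2 := by
  have h2 := mul_le_mul_of_nonneg_left (q_lower x t s) h0
  have h3 := mul_le_mul_of_nonneg_left (q_lower' x t s) (by linarith : (0:ℝ) ≤ 1 - τ)
  nlinarith

private lemma pt_upper (τ x t s : ℝ) (h0 : 0 ≤ τ) (h1 : τ ≤ 1) :
    τ * (max (x-s) 0)^2 + (1-τ) * (max (s-x) 0)^2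
    ≤ τ * (max (x-t) 0)^2 + (1-τ) * (max (t-x) 0)^2
      - (s - t) * (2*τ*max (x-t) 0 - 2*(1-τ)*max (t-x) 0) + (s-t)^2 := by
  have h2 := mul_le_mul_of_nonneg_left (q_upper x t s) h0
  have h3 := mul_le_mul_of_nonneg_left (q_upper' x t s) (by linarith : (0:ℝ) ≤ 1 - τ)
  nlinarith

theorem expectile_loss_minimizer_iff
    {Ω : Type*} [MeasurableSpace Ω] (P : Measure Ω) [IsProbabilityMeasure P]
    (X : Ω → ℝ) (hX : Measurable X)
    (hX2 : Integrable (fun ω => (X ω) ^ 2) P)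
    (τ : ℝ) (hτ : τ ∈ Set.Ioo (0 : ℝ) 1)
    (t : ℝ) :
    (∀ s : ℝ,
        ∫ ω, |τ - (if X ω < t then (1 : ℝ) else 0)| * (X ω - t) ^ 2 ∂P
          ≤ ∫ ω, |τ - (if X ω < s then (1 : ℝ) else 0)| * (X ω - s) ^ 2 ∂P) ↔
      τ * ∫ ω, max (X ω - t) 0 ∂P = (1 - τ) * ∫ ω, max (t - X ω) 0 ∂P := by
  obtain ⟨hτ0, hτ1⟩ := hτ
  have hτ0' : (0:ℝ) ≤ τ := le_of_lt hτ0
  have hτ1' : τ ≤ 1 := le_of_lt hτ1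
  -- integrability of X
  have hXi : Integrable X P := by
    have hg : Integrable (fun ω => 1 + X ω ^ 2) P := by
      have := (integrable_const (1:ℝ)).add hX2
      simpa using this
    refine hg.mono' hX.aestronglyMeasurable (ae_of_all _ fun ω => ?_)
    rw [Real.norm_eq_abs]
    nlinarith [sq_abs (X ω), sq_nonneg (|X ω| - 1)]
  -- integrability of (X - s)^2
  have hsq : ∀ s : ℝ, Integrable (fun ω => (X ω - s)^2) P := by
    intro s
    have : (fun ω => (X ω - s)^2) = fun ω => X ω^2 - (2*s)*X ω + s^2 := by
      funext ω; ring
    rw [this]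
    exact (hX2.sub (hXi.const_mul _)).add (integrable_const _)
  -- measurability helpers
  have hm1 : ∀ s : ℝ, Measurable (fun ω => max (X ω - s) 0) :=
    fun s => (hX.sub measurable_const).max measurable_const
  have hm2 : ∀ s : ℝ, Measurable (fun ω => max (s - X ω) 0) :=
    fun s => (measurable_const.sub hX).max measurable_const
  -- integrability of (max (X - s) 0)^2 and (max (s - X) 0)^2
  have hq1 : ∀ s : ℝ, Integrable (fun ω => (max (X ω - s) 0)^2) P := by
    intro s
    refine (hsq s).mono' ((hm1 s).pow_const 2).aestronglyMeasurable
      (ae_of_all _ fun ω => ?_)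
    rw [Real.norm_eq_abs, abs_of_nonneg (sq_nonneg _)]
    rcases le_total (X ω - s) 0 with h|h
    · rw [max_eq_right h]; nlinarith [sq_nonneg (X ω - s)]
    · rw [max_eq_left h]
  have hq2 : ∀ s : ℝ, Integrable (fun ω => (max (s - X ω) 0)^2) P := by
    intro s
    refine (hsq s).mono' ((hm2 s).pow_const 2).aestronglyMeasurable
      (ae_of_all _ fun ω => ?_)
    rw [Real.norm_eq_abs, abs_of_nonneg (sq_nonneg _)]
    rcases le_total (s - X ω) 0 with h|h
    · rw [max_eq_right h]; nlinarith [sq_nonneg (X ω - s)]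
    · rw [max_eq_left h]; nlinarith
  -- integrability of the loss integrands
  have hL : ∀ s : ℝ, Integrable
      (fun ω => τ * (max (X ω - s) 0)^2 + (1-τ) * (max (s - X ω) 0)^2) P :=
    fun s => ((hq1 s).const_mul τ).add ((hq2 s).const_mul (1-τ))
  -- integrability of max (X - t) 0 and max (t - X) 0
  have hAbs : Integrable (fun ω => |X ω| + |t|) P := hXi.abs.add (integrable_const _)
  have hMt1 : Integrable (fun ω => max (X ω - t) 0) P := by
    refine hAbs.mono' (hm1 t).aestronglyMeasurable (ae_of_all _ fun ω => ?_)
    rw [Real.norm_eq_abs]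
    rcases le_total (X ω - t) 0 with h|h
    · rw [max_eq_right h, abs_zero]; exact add_nonneg (abs_nonneg _) (abs_nonneg _)
    · rw [max_eq_left h, abs_of_nonneg h]
      calc X ω - t ≤ |X ω| - t := by have := le_abs_self (X ω); linarith
        _ ≤ |X ω| + |t| := by have := neg_abs_le t; linarith
  have hMt2 : Integrable (fun ω => max (t - X ω) 0) P := by
    refine hAbs.mono' (hm2 t).aestronglyMeasurable (ae_of_all _ fun ω => ?_)
    rw [Real.norm_eq_abs]
    rcases le_total (t - X ω) 0 with h|h
    · rw [max_eq_right h, abs_zero]; exact add_nonneg (abs_nonneg _) (abs_nonneg _)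
    · rw [max_eq_left h, abs_of_nonneg h]
      calc t - X ω ≤ |t| - X ω := by have := le_abs_self t; linarith
        _ ≤ |X ω| + |t| := by have := neg_abs_le (X ω); linarith
  -- rewrite the loss integrals
  have hcong : ∀ s : ℝ,
      (∫ ω, |τ - (if X ω < s then (1 : ℝ) else 0)| * (X ω - s) ^ 2 ∂P)
        = ∫ ω, (τ * (max (X ω - s) 0)^2 + (1-τ) * (max (s - X ω) 0)^2) ∂P := by
    intro s
    exact integral_congr_ae (ae_of_all _ fun ω => expectile_pt_eq τ (X ω) s hτ0' hτ1')
  set L : ℝ → ℝ := fun s =>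
    ∫ ω, (τ * (max (X ω - s) 0)^2 + (1-τ) * (max (s - X ω) 0)^2) ∂P with hLdef
  set A : ℝ := ∫ ω, max (X ω - t) 0 ∂P with hA
  set B : ℝ := ∫ ω, max (t - X ω) 0 ∂P with hB
  set W : ℝ := 2*τ*A - 2*(1-τ)*B with hW
  -- integrability of the "derivative" integrand
  have hwInt : Integrable
      (fun ω => 2*τ*max (X ω - t) 0 - 2*(1-τ)*max (t - X ω) 0) P :=
    (hMt1.const_mul (2*τ)).sub (hMt2.const_mul (2*(1-τ)))
  have hc1 : Integrable (fun ω => 2*τ*max (X ω - t) 0) P := hMt1.const_mul (2*τ)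
  have hc2 : Integrable (fun ω => 2*(1-τ)*max (t - X ω) 0) P := hMt2.const_mul (2*(1-τ))
  have hWval : W = ∫ ω, (2*τ*max (X ω - t) 0 - 2*(1-τ)*max (t - X ω) 0) ∂P := by
    rw [integral_sub hc1 hc2, integral_const_mul, integral_const_mul]
  -- the two integral inequalities
  have hlow : ∀ s : ℝ, L t - (s - t) * W ≤ L s := by
    intro s
    have hcm : Integrable (fun ω =>
        (s - t) * (2*τ*max (X ω - t) 0 - 2*(1-τ)*max (t - X ω) 0)) P :=
      hwInt.const_mul (s - t)
    have hI3 : Integrable (fun ω =>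
        (τ * (max (X ω - t) 0)^2 + (1-τ) * (max (t - X ω) 0)^2)
          - (s - t) * (2*τ*max (X ω - t) 0 - 2*(1-τ)*max (t - X ω) 0)) P :=
      (hL t).sub hcm
    have heq : L t - (s - t) * W
        = ∫ ω, ((τ * (max (X ω - t) 0)^2 + (1-τ) * (max (t - X ω) 0)^2)
            - (s - t) * (2*τ*max (X ω - t) 0 - 2*(1-τ)*max (t - X ω) 0)) ∂P := by
      rw [integral_sub (hL t) hcm, integral_const_mul, hWval]
    rw [heq]
    exact integral_mono hI3 (hL s) (fun ω => pt_lower τ (X ω) t s hτ0' hτ1')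
  have hupp : ∀ s : ℝ, L s ≤ L t - (s - t) * W + (s - t)^2 := by
    intro s
    have hcm : Integrable (fun ω =>
        (s - t) * (2*τ*max (X ω - t) 0 - 2*(1-τ)*max (t - X ω) 0)) P :=
      hwInt.const_mul (s - t)
    have hI3 : Integrable (fun ω =>
        (τ * (max (X ω - t) 0)^2 + (1-τ) * (max (t - X ω) 0)^2)
          - (s - t) * (2*τ*max (X ω - t) 0 - 2*(1-τ)*max (t - X ω) 0)) P :=
      (hL t).sub hcm
    have heq : L t - (s - t) * W + (s - t)^2
        = ∫ ω, ((τ * (max (X ω - t) 0)^2 + (1-τ) * (max (t - X ω) 0)^2)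
            - (s - t) * (2*τ*max (X ω - t) 0 - 2*(1-τ)*max (t - X ω) 0)
            + (s - t)^2) ∂P := by
      rw [integral_add hI3 (integrable_const _),
        integral_sub (hL t) hcm, integral_const_mul, hWval,
        integral_const, probReal_univ]
      simp
      rfl
    rw [heq]
    exact integral_mono (hL s) (hI3.add (integrable_const _))
      (fun ω => pt_upper τ (X ω) t s hτ0' hτ1')
  constructor
  · intro hmin
    have hmin' : ∀ s : ℝ, L t ≤ L s := by
      intro s
      have := hmin s
      rwa [hcong t, hcong s] at this
    -- take s = t + W/2
    have h1 := hmin' (t + W/2)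
    have h2 := hupp (t + W/2)
    have hW0 : W = 0 := by nlinarith [sq_nonneg W]
    have : 2*τ*A - 2*(1-τ)*B = 0 := hW0
    linarith
  · intro heq
    intro s
    rw [hcong t, hcong s]
    have hW0 : W = 0 := by rw [hW]; linarith
    have := hlow s
    rw [hW0] at this
    linarith
end

section
/- Let (Ω, P) be a probability space, X : Ω → ℝ an integrable random variable that is essentially bounded above with M = essSup X, and τ ∈ (0,1). If P(X < M) > 0, then the τ-expectile of X, i.e., the unique real number t satisfying τ·∫ max(X − t, 0) dP = (1 − τ)·∫ max(t − X, 0) dP, satisfies t < M. -/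
open MeasureTheory

theorem expectile_lt_essSup
    {Ω : Type*} [MeasurableSpace Ω] (P : Measure Ω) [IsProbabilityMeasure P]
    (X : Ω → ℝ) (hX : Integrable X P)
    (hbdd : ∃ C : ℝ, ∀ᵐ ω ∂P, X ω ≤ C)
    (τ : ℝ) (hτ : τ ∈ Set.Ioo (0 : ℝ) 1)
    (hlt : 0 < P {ω | X ω < essSup X P})
    (t : ℝ)
    (ht : τ * ∫ ω, max (X ω - t) 0 ∂P = (1 - τ) * ∫ ω, max (t - X ω) 0 ∂P) :
    t < essSup X P := by
  set M := essSup X P with hM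
  by_contra hcon
  push_neg at hcon
  obtain ⟨C, hC⟩ := hbdd
  have hbu : Filter.IsBoundedUnder (· ≤ ·) (ae P) X :=
    ⟨C, by simpa [Filter.eventually_map] using hC⟩
  have hle : ∀ᵐ ω ∂P, X ω ≤ M := ae_le_essSup hbu
  -- a.e. X ω ≤ t
  have hlet : ∀ᵐ ω ∂P, X ω ≤ t := hle.mono fun ω h => h.trans hcon
  have h1 : (∫ ω, max (X ω - t) 0 ∂P) = 0 := by
    rw [integral_eq_zero_iff_of_nonneg_ae]
    · exact hlet.mono fun ω h => by simp [max_eq_right, sub_nonpos.mpr h]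
    · exact Filter.Eventually.of_forall fun ω => le_max_right _ _
    · exact ((hX.sub (integrable_const t)).pos_part)
  have hτpos : 0 < τ := hτ.1
  have hτlt : 0 < 1 - τ := by linarith [hτ.2]
  have h2 : (∫ ω, max (t - X ω) 0 ∂P) = 0 := by
    have := ht
    rw [h1, mul_zero] at this
    exact (mul_eq_zero.mp this.symm).resolve_left (by linarith)
  have hint : Integrable (fun ω => max (t - X ω) 0) P :=
    ((integrable_const t).sub hX).pos_part
  have h3 : ∀ᵐ ω ∂P, max (t - X ω) 0 = 0 := by
    have := (integral_eq_zero_iff_of_nonneg_ae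
      (Filter.Eventually.of_forall fun ω => le_max_right _ _) hint).mp h2
    filter_upwards [this] with ω h using h
  have h4 : ∀ᵐ ω ∂P, M ≤ X ω := by
    filter_upwards [h3] with ω h
    have : t - X ω ≤ 0 := by
      by_contra hc
      push_neg at hc
      rw [max_eq_left hc.le] at h
      linarith
    linarith
  have h5 : P {ω | X ω < M} = 0 := by
    have := h4
    rw [ae_iff] at this
    simpa [not_le] using this
  rw [h5] at hlt
  exact lt_irrefl 0 hlt
end
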